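/- Let F(k) = A + b_{J(k)} K_{J(k)} where J : ℕ → 𝒥 takes values in a finite index set 𝒥, and suppose there exists a positive definite matrix family {P_J}_{J ∈ 𝒥} and ε > 0 such that (A + b_J K_J)ᵀ P_{J'} (A + b_J K_J) − P_J ≼ −ε I for all J, J' ∈ 𝒥. Then the switched system x(k+1) = F(k) x(k) is globally exponentially stable for every switching signal J(·): there exist c > 0 and μ ∈ (0,1) with |x(k)| ≤ c μ^k |x(0)|. -/

import Mathlib

open Matrix

private lemma quadCont {n : ℕ} (M : Matrix (Fin n) (Fin n) ℝ) :
    Continuous fun x : EuclideanSpace ℝ (Fin n) => x ⬝ᵥ M.mulVec x := by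
  have h : Continuous fun y : Fin n → ℝ => y ⬝ᵥ M.mulVec y := by
    simp only [dotProduct, Matrix.mulVec]
    fun_prop
  exact h.comp (PiLp.continuous_ofLp (p := 2) (β := fun _ : Fin n => ℝ))

private lemma quadSmul {n : ℕ} (M : Matrix (Fin n) (Fin n) ℝ) (c : ℝ) (x : Fin n → ℝ) :
    (c • x) ⬝ᵥ M.mulVec (c • x) = c ^ 2 * (x ⬝ᵥ M.mulVec x) := by
  simp [Matrix.mulVec_smul, smul_eq_mul]; ring

private lemma dotSelf {n : ℕ} (x : EuclideanSpace ℝ (Fin n)) : x ⬝ᵥ x = ‖x‖ ^ 2 := by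
  rw [EuclideanSpace.norm_eq, Real.sq_sqrt (Finset.sum_nonneg fun i _ => sq_nonneg _)]
  simp [dotProduct, Real.norm_eq_abs, sq, abs_mul_abs_self]

/-- lower and upper uniform bounds on the quadratic forms -/
private lemma bounds {n : ℕ} (hn : 0 < n) {ι : Type*} [Fintype ι] [Nonempty ι]
    (P : ι → Matrix (Fin n) (Fin n) ℝ) (hP : ∀ i, (P i).PosDef) :
    ∃ α > (0:ℝ), ∃ β > (0:ℝ), ∀ i, ∀ x : EuclideanSpace ℝ (Fin n),
      α * ‖x‖ ^ 2 ≤ x ⬝ᵥ (P i).mulVec x ∧ x ⬝ᵥ (P i).mulVec x ≤ β * ‖x‖ ^ 2 := by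
  haveI : Nontrivial (EuclideanSpace ℝ (Fin n)) := by
    refine ⟨0, EuclideanSpace.single ⟨0, hn⟩ 1, ?_⟩
    intro h
    have := congrArg (fun y => ‖y‖) h
    simp [EuclideanSpace.norm_single] at this
  have hSne : (Metric.sphere (0 : EuclideanSpace ℝ (Fin n)) 1).Nonempty :=
    NormedSpace.sphere_nonempty.2 zero_le_one
  have hSc : IsCompact (Metric.sphere (0 : EuclideanSpace ℝ (Fin n)) 1) :=
    isCompact_sphere _ _
  -- per-index min and max on the sphere
  have key : ∀ i, ∃ a > (0:ℝ), ∃ c > (0:ℝ),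
      ∀ x : EuclideanSpace ℝ (Fin n), a * ‖x‖ ^ 2 ≤ x ⬝ᵥ (P i).mulVec x ∧
        x ⬝ᵥ (P i).mulVec x ≤ c * ‖x‖ ^ 2 := by
    intro i
    obtain ⟨z, hz, hzmin⟩ := hSc.exists_isMinOn hSne (quadCont (P i)).continuousOn
    obtain ⟨w, hw, hwmax⟩ := hSc.exists_isMaxOn hSne (quadCont (P i)).continuousOn
    have hz1 : ‖z‖ = 1 := by simpa using mem_sphere_zero_iff_norm.mp hz
    have hzne : z ≠ 0 := by intro h; rw [h] at hz1; simp at hz1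
    have hzpos : 0 < z ⬝ᵥ (P i).mulVec z := by
      simpa using (hP i).dotProduct_mulVec_pos (x := z.ofLp) (by simpa using hzne)
    have hwpos : 0 < w ⬝ᵥ (P i).mulVec w := lt_of_lt_of_le hzpos (hzmin hw)
    refine ⟨_, hzpos, _, hwpos, fun x => ?_⟩
    rcases eq_or_ne x 0 with rfl | hx
    · simp
    · have hnx : (0:ℝ) < ‖x‖ := norm_pos_iff.2 hx
      set y : EuclideanSpace ℝ (Fin n) := ‖x‖⁻¹ • x with hy
      have hyS : y ∈ Metric.sphere (0 : EuclideanSpace ℝ (Fin n)) 1 := by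
        simp [hy, mem_sphere_zero_iff_norm, norm_smul, abs_of_pos (inv_pos.2 hnx),
          inv_mul_cancel₀ hnx.ne']
      have hq : y ⬝ᵥ (P i).mulVec y = ‖x‖⁻¹ ^ 2 * (x ⬝ᵥ (P i).mulVec x) :=
        quadSmul (P i) ‖x‖⁻¹ x
      have h1 := hzmin hyS
      have h2 := hwmax hyS
      simp only [Set.mem_setOf_eq] at h1 h2
      rw [hq] at h1 h2
      constructor
      · have := mul_le_mul_of_nonneg_left h1 (le_of_lt (pow_pos hnx 2))
        calc (z ⬝ᵥ (P i).mulVec z) * ‖x‖ ^ 2 = ‖x‖ ^ 2 * (z ⬝ᵥ (P i).mulVec z) := by ring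
        _ ≤ ‖x‖ ^ 2 * (‖x‖⁻¹ ^ 2 * (x ⬝ᵥ (P i).mulVec x)) := this
        _ = x ⬝ᵥ (P i).mulVec x := by field_simp
      · have := mul_le_mul_of_nonneg_left h2 (le_of_lt (pow_pos hnx 2))
        calc x ⬝ᵥ (P i).mulVec x = ‖x‖ ^ 2 * (‖x‖⁻¹ ^ 2 * (x ⬝ᵥ (P i).mulVec x)) := by
              field_simp
        _ ≤ ‖x‖ ^ 2 * (w ⬝ᵥ (P i).mulVec w) := this
        _ = (w ⬝ᵥ (P i).mulVec w) * ‖x‖ ^ 2 := by ring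
    -- end
  choose a ha c hc habc using key
  refine ⟨Finset.univ.inf' Finset.univ_nonempty a, ?_,
    Finset.univ.sup' Finset.univ_nonempty c, ?_, fun i x => ?_⟩
  · exact (Finset.lt_inf'_iff _).2 fun i _ => ha i
  · exact lt_of_lt_of_le (hc (Classical.arbitrary ι))
      (Finset.le_sup' c (Finset.mem_univ _))
  · constructor
    · exact le_trans (mul_le_mul_of_nonneg_right
        (Finset.inf'_le a (Finset.mem_univ i)) (sq_nonneg _)) (habc i x).1
    · exact le_trans (habc i x).2 (mul_le_mul_of_nonneg_right
        (Finset.le_sup' c (Finset.mem_univ i)) (sq_nonneg _))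

private lemma decrease {n : ℕ} {F P' Q : Matrix (Fin n) (Fin n) ℝ} {ε : ℝ}
    (h : (Q - F.transpose * P' * F - ε • (1 : Matrix (Fin n) (Fin n) ℝ)).PosSemidef)
    (x : Fin n → ℝ) :
    (F *ᵥ x) ⬝ᵥ P' *ᵥ (F *ᵥ x) ≤ x ⬝ᵥ Q *ᵥ x - ε * (x ⬝ᵥ x) := by
  have h0 := h.dotProduct_mulVec_nonneg x
  simp only [star_trivial] at h0
  rw [Matrix.sub_mulVec, Matrix.sub_mulVec, dotProduct_sub, dotProduct_sub] at h0
  have e1 : x ⬝ᵥ (F.transpose * P' * F) *ᵥ x = (F *ᵥ x) ⬝ᵥ P' *ᵥ (F *ᵥ x) := by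
    rw [← Matrix.mulVec_mulVec, ← Matrix.mulVec_mulVec, Matrix.dotProduct_mulVec,
      Matrix.vecMul_transpose]
  have e2 : x ⬝ᵥ (ε • (1 : Matrix (Fin n) (Fin n) ℝ)) *ᵥ x = ε * (x ⬝ᵥ x) := by
    rw [Matrix.smul_mulVec, Matrix.one_mulVec, dotProduct_smul, smul_eq_mul]
  rw [e1, e2] at h0
  linarith

private lemma sqrtPow {ρ : ℝ} (hρ : 0 ≤ ρ) (k : ℕ) :
    Real.sqrt (ρ ^ k) = (Real.sqrt ρ) ^ k := by
  induction k with
  | zero => simp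
  | succ k ih => rw [pow_succ, pow_succ, Real.sqrt_mul (pow_nonneg hρ k), ih]

theorem stmt12 {n : ℕ} {ι : Type*} [Fintype ι]
    (A : Matrix (Fin n) (Fin n) ℝ) (m : ι → ℕ)
    (b : (i : ι) → Matrix (Fin n) (Fin (m i)) ℝ)
    (K : (i : ι) → Matrix (Fin (m i)) (Fin n) ℝ)
    (P : ι → Matrix (Fin n) (Fin n) ℝ) (hP : ∀ i, (P i).PosDef)
    (ε : ℝ) (hε : 0 < ε)
    (hLyap : ∀ i i' : ι,
      (P i - (A + b i * K i).transpose * P i' * (A + b i * K i)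
        - ε • (1 : Matrix (Fin n) (Fin n) ℝ)).PosSemidef) :
    ∃ c > 0, ∃ μ ∈ Set.Ioo (0 : ℝ) 1,
      ∀ J : ℕ → ι, ∀ x : ℕ → EuclideanSpace ℝ (Fin n),
        (∀ k, x (k + 1) = (A + b (J k) * K (J k)).mulVec (x k)) →
        ∀ k, ‖x k‖ ≤ c * μ ^ k * ‖x 0‖ := by
  rcases isEmpty_or_nonempty ι with hι | hι
  · exact ⟨1, one_pos, 1/2, ⟨by norm_num, by norm_num⟩, fun J => isEmptyElim (J 0)⟩
  rcases Nat.eq_zero_or_pos n with rfl | hn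
  · refine ⟨1, one_pos, 1/2, ⟨by norm_num, by norm_num⟩, fun J x _ k => ?_⟩
    have h0 : ∀ j, ‖x j‖ = 0 := fun j => by simp [EuclideanSpace.norm_eq]
    rw [h0, h0]; positivity
  obtain ⟨α, hα, β, hβ, hbd⟩ := bounds hn P hP
  set ρ : ℝ := max (1 - ε / β) (1/2) with hρdef
  have hρ0 : (0:ℝ) < ρ := lt_of_lt_of_le (by norm_num) (le_max_right _ _)
  have hρ1 : ρ < 1 := max_lt (by have : 0 < ε / β := div_pos hε hβ; linarith) (by norm_num)
  refine ⟨Real.sqrt (β / α), Real.sqrt_pos.2 (div_pos hβ hα), Real.sqrt ρ,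
    ⟨Real.sqrt_pos.2 hρ0, (Real.sqrt_lt' one_pos).2 (by simpa using hρ1)⟩,
    fun J x hx k => ?_⟩
  set V : ℕ → ℝ := fun j => (x j) ⬝ᵥ (P (J j)) *ᵥ (x j) with hVdef
  have hVlb : ∀ j, α * ‖x j‖ ^ 2 ≤ V j := fun j => (hbd _ _).1
  have hVub : ∀ j, V j ≤ β * ‖x j‖ ^ 2 := fun j => (hbd _ _).2
  have hV0 : ∀ j, 0 ≤ V j := fun j => le_trans (by positivity) (hVlb j)
  have hdec : ∀ j, V (j + 1) ≤ ρ * V j := by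
    intro j
    have h1 : V (j + 1) ≤ V j - ε * ‖x j‖ ^ 2 := by
      have hd := decrease (hLyap (J j) (J (j + 1))) (x j)
      rw [← hx j, dotSelf] at hd
      exact hd
    have h2 : (ε / β) * V j ≤ ε * ‖x j‖ ^ 2 := by
      have := mul_le_mul_of_nonneg_left (hVub j) (le_of_lt (div_pos hε hβ))
      calc (ε / β) * V j ≤ (ε / β) * (β * ‖x j‖ ^ 2) := this
        _ = ε * ‖x j‖ ^ 2 := by field_simp
    have h3 : V (j + 1) ≤ (1 - ε / β) * V j := by nlinarith [h1, h2]
    exact le_trans h3 (mul_le_mul_of_nonneg_right (le_max_left _ _) (hV0 j))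
  have hgeo : ∀ j, V j ≤ ρ ^ j * V 0 := by
    intro j
    induction j with
    | zero => simp
    | succ j ih =>
      calc V (j + 1) ≤ ρ * V j := hdec j
        _ ≤ ρ * (ρ ^ j * V 0) := mul_le_mul_of_nonneg_left ih hρ0.le
        _ = ρ ^ (j + 1) * V 0 := by ring
  have h4 : α * ‖x k‖ ^ 2 ≤ ρ ^ k * (β * ‖x 0‖ ^ 2) :=
    le_trans (hVlb k) (le_trans (hgeo k)
      (mul_le_mul_of_nonneg_left (hVub 0) (pow_nonneg hρ0.le k)))
  have h5 : ‖x k‖ ^ 2 ≤ (β / α) * (ρ ^ k * ‖x 0‖ ^ 2) := by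
    rw [div_mul_eq_mul_div, le_div_iff₀ hα]
    nlinarith [h4]
  have h6 := Real.sqrt_le_sqrt h5
  rw [Real.sqrt_sq (norm_nonneg _), Real.sqrt_mul (le_of_lt (div_pos hβ hα)),
    Real.sqrt_mul (pow_nonneg hρ0.le k), Real.sqrt_sq (norm_nonneg _),
    sqrtPow hρ0.le] at h6
  calc ‖x k‖ ≤ Real.sqrt (β / α) * (Real.sqrt ρ ^ k * ‖x 0‖) := h6
    _ = Real.sqrt (β / α) * Real.sqrt ρ ^ k * ‖x 0‖ := by ring
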